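/- For every k ∈ {1, …, n} and every t ∈ I_k, the approximation gap localizes to the interval containing t: f̃(t) − f_X(t) = p_k · ( min(t, μ_k) − E[min(t, X) | X ∈ I_k] ), and this quantity is nonnegative. -/

import Mathlib

open MeasureTheory

/-- The `j`-th region of the partition of `ℝ` induced by points `q 0 < q 1 < ⋯ < q n`:
`I_0 = (−∞, q 0]`, `I_j = (q (j−1), q j]` for `1 ≤ j ≤ n`, and `I_{n+1} = (q n, ∞)`. -/
noncomputable def seg (q : ℕ → ℝ) (n j : ℕ) : Set ℝ :=
  if j = 0 then Set.Iic (q 0)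
  else if j ≤ n then Set.Ioc (q (j - 1)) (q j)
  else Set.Ioi (q n)

/-- `p_j = P(X ∈ I_j)`. -/
noncomputable def segProb {Ω : Type*} [MeasurableSpace Ω]
    (P : Measure Ω) (X : Ω → ℝ) (q : ℕ → ℝ) (n j : ℕ) : ℝ :=
  (P {ω | X ω ∈ seg q n j}).toReal

/-- `μ_j = E[X | X ∈ I_j] = E[1_{X ∈ I_j} X] / p_j`. -/
noncomputable def segMean {Ω : Type*} [MeasurableSpace Ω]
    (P : Measure Ω) (X : Ω → ℝ) (q : ℕ → ℝ) (n j : ℕ) : ℝ :=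
  (∫ ω in {ω | X ω ∈ seg q n j}, X ω ∂P) / segProb P X q n j

/-- The induced piecewise linear approximation `f̃(s) = ∑_{j=0}^{n+1} p_j · min(s, μ_j)`. -/
noncomputable def ftilde {Ω : Type*} [MeasurableSpace Ω]
    (P : Measure Ω) (X : Ω → ℝ) (q : ℕ → ℝ) (n : ℕ) (s : ℝ) : ℝ :=
  ∑ j ∈ Finset.range (n + 2), segProb P X q n j * min s (segMean P X q n j)

lemma seg_measurable (q : ℕ → ℝ) (n j : ℕ) : MeasurableSet (seg q n j) := by
  unfold seg
  split_ifs
  · exact measurableSet_Iic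
  · exact measurableSet_Ioc
  · exact measurableSet_Ioi

lemma seg_subset_Iic (q : ℕ → ℝ) (n : ℕ) {j : ℕ} (hj : j ≤ n) :
    seg q n j ⊆ Set.Iic (q j) := by
  intro x hx
  unfold seg at hx
  split_ifs at hx with h1 h2
  · subst h1; exact hx
  · exact hx.2

lemma seg_subset_Ioi (q : ℕ → ℝ) (n : ℕ) {j : ℕ} (h1 : 1 ≤ j) (h2 : j ≤ n + 1) :
    seg q n j ⊆ Set.Ioi (q (j - 1)) := by
  intro x hx
  unfold seg at hx
  split_ifs at hx with ha hb
  · omega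
  · exact hx.1
  · have : j - 1 = n := by omega
    rw [this]; exact hx

/-- For every `k ∈ {1,…,n}` and every `t ∈ I_k = (q (k−1), q k]`,
`f̃(t) − f_X(t) = p_k · (min(t, μ_k) − E[min(t,X) | X ∈ I_k])`, and this is nonnegative. -/
theorem gap_localizes {Ω : Type*} [MeasurableSpace Ω]
    (P : Measure Ω) [IsProbabilityMeasure P]
    (X : Ω → ℝ) (hX : Integrable X P)
    (a b : ℝ) (hab : a < b) (n : ℕ) (hn : 1 ≤ n)
    (q : ℕ → ℝ) (hq0 : q 0 = a) (hqn : q n = b)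
    (hmono : ∀ i < n, q i < q (i + 1))
    (hpos : ∀ j ≤ n + 1, 0 < segProb P X q n j) :
    ∀ k, 1 ≤ k → k ≤ n → ∀ t ∈ Set.Ioc (q (k - 1)) (q k),
      (ftilde P X q n t - ∫ ω, min t (X ω) ∂P
          = segProb P X q n k *
            (min t (segMean P X q n k)
              - (∫ ω in {ω | X ω ∈ seg q n k}, min t (X ω) ∂P) / segProb P X q n k)) ∧
        0 ≤ segProb P X q n k *
            (min t (segMean P X q n k)
              - (∫ ω in {ω | X ω ∈ seg q n k}, min t (X ω) ∂P) / segProb P X q n k) := by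
  intro k hk1 hkn t ht
  -- a measurable representative of X
  obtain ⟨Y, hYm, hXY⟩ : ∃ Y : Ω → ℝ, Measurable Y ∧ X =ᵐ[P] Y :=
    ⟨hX.aemeasurable.mk X, hX.aemeasurable.measurable_mk, hX.aemeasurable.ae_eq_mk⟩
  have hYint : Integrable Y P := hX.congr hXY
  set B : ℕ → Set Ω := fun j => Y ⁻¹' seg q n j with hB
  have hBm : ∀ j, MeasurableSet (B j) := fun j => hYm (seg_measurable q n j)
  -- the defining sets agree a.e. with the measurable ones
  have hAeq : ∀ j, {ω | X ω ∈ seg q n j} =ᵐ[P] B j := by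
    intro j
    filter_upwards [hXY] with ω h
    change (X ω ∈ seg q n j) = (Y ω ∈ seg q n j)
    rw [h]
  have hRe : ∀ j, P.restrict {ω | X ω ∈ seg q n j} = P.restrict (B j) :=
    fun j => Measure.restrict_congr_set (hAeq j)
  have hPeq : ∀ j, segProb P X q n j = (P (B j)).toReal :=
    fun j => congrArg ENNReal.toReal (measure_congr (hAeq j))
  have hMean : ∀ j, segMean P X q n j = (∫ ω in B j, Y ω ∂P) / segProb P X q n j := by
    intro j
    unfold segMean
    rw [hRe j, integral_congr_ae (ae_restrict_of_ae hXY)]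
  -- monotonicity of q
  have hq_le : ∀ j, j ≤ n → ∀ i, i ≤ j → q i ≤ q j := by
    intro j
    induction j with
    | zero => intro _ i hi; rw [Nat.le_zero.mp hi]
    | succ m ih =>
      intro hm i hi
      rcases Nat.lt_or_ge i (m + 1) with h | h
      · exact le_trans (ih (by omega) i (by omega)) (le_of_lt (hmono m (by omega)))
      · rw [(by omega : i = m + 1)]
  -- disjointness of the regions
  have hdisj : ∀ i j : ℕ, i < j → j ≤ n + 1 → Disjoint (seg q n i) (seg q n j) := by
    intro i j hij hj
    refine (Set.Iic_disjoint_Ioi (le_refl (q (j - 1)))).mono ?_ (seg_subset_Ioi q n (by omega) hj)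
    exact (seg_subset_Iic q n (by omega : i ≤ n)).trans
      (Set.Iic_subset_Iic.2 (hq_le (j - 1) (by omega) i (by omega)))
  -- the regions cover ℝ
  have hcover : (⋃ j ∈ Finset.range (n + 2), seg q n j) = Set.univ := by
    apply Set.eq_univ_of_forall
    intro x
    by_cases hxn : x ≤ q n
    · have hfind : ∀ m, m ≤ n → x ≤ q m → ∃ j ≤ n + 1, x ∈ seg q n j := by
        intro m
        induction m with
        | zero => intro _ hx; exact ⟨0, by omega, by simp [seg, hx]⟩
        | succ m ih =>
          intro hm hx
          by_cases h : x ≤ q m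
          · exact ih (by omega) h
          · refine ⟨m + 1, by omega, ?_⟩
            simp only [seg, if_neg (by omega : ¬ m + 1 = 0), if_pos hm, Nat.add_sub_cancel]
            exact ⟨lt_of_not_ge h, hx⟩
      obtain ⟨j, hj, hx⟩ := hfind n le_rfl hxn
      exact Set.mem_biUnion (Finset.mem_range.2 (by omega)) hx
    · refine Set.mem_biUnion (Finset.mem_range.2 (by omega : n + 1 < n + 2)) ?_
      simp only [seg, if_neg (by omega : ¬ n + 1 = 0), if_neg (by omega : ¬ n + 1 ≤ n)]
      exact lt_of_not_ge hxn
  -- integrability of the truncation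
  have hmin : Integrable (fun ω => min t (Y ω)) P := by
    exact (integrable_const t).inf hYint
  -- total integral splits along the partition
  have htot : ∫ ω, min t (X ω) ∂P
      = ∑ j ∈ Finset.range (n + 2), ∫ ω in B j, min t (Y ω) ∂P := by
    have h1 : ∫ ω, min t (X ω) ∂P = ∫ ω, min t (Y ω) ∂P := by
      refine integral_congr_ae ?_
      filter_upwards [hXY] with ω h
      rw [h]
    have h2 : (⋃ j ∈ Finset.range (n + 2), B j) = Set.univ := by
      simp only [hB, ← Set.preimage_iUnion₂, hcover, Set.preimage_univ]
    rw [h1, ← setIntegral_univ, ← h2]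
    refine integral_biUnion_finset _ (fun j _ => hBm j) ?_ (fun j _ => hmin.integrableOn)
    intro i hi j hj hij
    rcases Nat.lt_or_ge i j with h | h
    · exact (hdisj i j h (by simpa using Nat.lt_succ_iff.mp (Finset.mem_range.mp hj))).preimage Y
    · exact ((hdisj j i (by omega) (by simpa using Nat.lt_succ_iff.mp (Finset.mem_range.mp hi))).preimage Y).symm
  -- all terms except `k` cancel
  have hterm : ∀ j ∈ Finset.range (n + 2), j ≠ k →
      segProb P X q n j * min t (segMean P X q n j) - ∫ ω in B j, min t (Y ω) ∂P = 0 := by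
    intro j hj hjk
    have hj' : j ≤ n + 1 := by have := Finset.mem_range.mp hj; omega
    have hp := hpos j hj'
    have hPB : (0:ℝ) < (P (B j)).toReal := by rw [← hPeq j]; exact hp
    rcases lt_or_gt_of_ne hjk with hlt | hgt
    · -- j < k : on `I_j` everything lies below `t`
      have hsub : seg q n j ⊆ Set.Iic (q (k - 1)) :=
        (seg_subset_Iic q n (by omega : j ≤ n)).trans
          (Set.Iic_subset_Iic.2 (hq_le (k - 1) (by omega) j (by omega)))
      have hYle : ∀ ω ∈ B j, Y ω ≤ q (k - 1) := fun ω hω => hsub hω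
      have hI : ∫ ω in B j, min t (Y ω) ∂P = ∫ ω in B j, Y ω ∂P :=
        setIntegral_congr_fun (hBm j)
          (fun ω hω => min_eq_right ((hYle ω hω).trans ht.1.le))
      have hIle : (∫ ω in B j, Y ω ∂P) ≤ q (k - 1) * (P (B j)).toReal := by
        calc (∫ ω in B j, Y ω ∂P) ≤ ∫ _ω in B j, q (k - 1) ∂P :=
              setIntegral_mono_on hYint.integrableOn
                integrableOn_const (hBm j) hYle
          _ = q (k - 1) * (P (B j)).toReal := by
              rw [setIntegral_const, smul_eq_mul, mul_comm, measureReal_def]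
      have hmu : segMean P X q n j ≤ q (k - 1) := by
        rw [hMean j, div_le_iff₀ hp, hPeq j]
        exact hIle
      rw [min_eq_right (hmu.trans ht.1.le), hI, hMean j]
      field_simp
      ring
    · -- j > k : on `I_j` everything lies above `t`
      have hsub : seg q n j ⊆ Set.Ioi (q k) :=
        (seg_subset_Ioi q n (by omega) hj').trans
          (Set.Ioi_subset_Ioi (hq_le (j - 1) (by omega) k (by omega)))
      have hYge : ∀ ω ∈ B j, q k ≤ Y ω := fun ω hω => le_of_lt (hsub hω)
      have hI : ∫ ω in B j, min t (Y ω) ∂P = ∫ _ω in B j, t ∂P :=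
        setIntegral_congr_fun (hBm j)
          (fun ω hω => min_eq_left (ht.2.trans (hYge ω hω)))
      have hIge : q k * (P (B j)).toReal ≤ ∫ ω in B j, Y ω ∂P := by
        calc q k * (P (B j)).toReal = ∫ _ω in B j, q k ∂P := by
              rw [setIntegral_const, smul_eq_mul, mul_comm, measureReal_def]
          _ ≤ ∫ ω in B j, Y ω ∂P :=
              setIntegral_mono_on integrableOn_const
                hYint.integrableOn (hBm j) hYge
      have hmu : q k ≤ segMean P X q n j := by
        rw [hMean j, le_div_iff₀ hp, hPeq j]
        exact hIge
      rw [min_eq_left (ht.2.trans hmu), hI, setIntegral_const, smul_eq_mul, measureReal_def, hPeq j]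
      ring
  -- the remaining term
  have hIk : (∫ ω in {ω | X ω ∈ seg q n k}, min t (X ω) ∂P)
      = ∫ ω in B k, min t (Y ω) ∂P := by
    rw [hRe k]
    refine integral_congr_ae (ae_restrict_of_ae ?_)
    filter_upwards [hXY] with ω h
    rw [h]
  have hpk := hpos k (by omega)
  have hmain : ftilde P X q n t - ∫ ω, min t (X ω) ∂P
      = segProb P X q n k * min t (segMean P X q n k) - ∫ ω in B k, min t (Y ω) ∂P := by
    rw [ftilde, htot, ← Finset.sum_sub_distrib]
    exact Finset.sum_eq_single_of_mem k (Finset.mem_range.2 (by omega)) hterm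
  have hbound : (∫ ω in {ω | X ω ∈ seg q n k}, min t (X ω) ∂P) / segProb P X q n k
      ≤ min t (segMean P X q n k) := by
    have hPBk : (0:ℝ) < (P (B k)).toReal := by rw [← hPeq k]; exact hpk
    rw [hIk, le_min_iff]
    constructor
    · rw [div_le_iff₀ hpk, hPeq k]
      calc (∫ ω in B k, min t (Y ω) ∂P) ≤ ∫ _ω in B k, t ∂P :=
            setIntegral_mono_on hmin.integrableOn
              integrableOn_const (hBm k)
              (fun ω _ => min_le_left _ _)
        _ = t * (P (B k)).toReal := by rw [setIntegral_const, smul_eq_mul, mul_comm, measureReal_def]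
    · rw [hMean k]
      refine div_le_div_of_nonneg_right ?_ hpk.le
      · exact setIntegral_mono_on hmin.integrableOn hYint.integrableOn (hBm k)
          (fun ω _ => min_le_right _ _)
  constructor
  · rw [hmain, hIk, mul_sub, mul_div_cancel₀ _ (ne_of_gt hpk)]
  · exact mul_nonneg hpk.le (sub_nonneg.2 hbound)
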